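/- Let U be a nonempty set of policies, J : U → ℝ the objective with J(u) ≥ 0 for all u ∈ U, J_c : U → ℝ the constraint function, ρ ∈ ℝ the tolerance, and define the Lagrangian L(u,λ) = J(u) + λ(J_c(u) − ρ). Suppose Slater's condition holds: there exists ũ ∈ U with J_c(ũ) < ρ. Suppose that for every λ ≥ 0 there is a policy u_λ ∈ U minimizing u ↦ L(u, λ) over U. Then the set {λ ≥ 0 : J_c(u_λ) ≤ ρ} is nonempty; in particular λ* = inf{λ ≥ 0 : J_c(u_λ) ≤ ρ} is finite. -/

import Mathlib

/-- Part (a) of the proof of Theorem 2: under Slater's condition, the set of multipliers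
`λ ≥ 0` whose Lagrangian minimizer is feasible is nonempty, so
`λ* = inf {λ ≥ 0 | J_c(u_λ) ≤ ρ}` is finite. -/
theorem optimal_multiplier_exists
    {U : Type*} [Nonempty U]
    (J Jc : U → ℝ) (hJ : ∀ u, 0 ≤ J u) (ρ : ℝ)
    (L : U → ℝ → ℝ) (hL : ∀ u lam, L u lam = J u + lam * (Jc u - ρ))
    (hSlater : ∃ utilde : U, Jc utilde < ρ)
    (uopt : ℝ → U)
    (hmin : ∀ lam : ℝ, 0 ≤ lam → ∀ u : U, L (uopt lam) lam ≤ L u lam) :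
    {lam : ℝ | 0 ≤ lam ∧ Jc (uopt lam) ≤ ρ}.Nonempty := by
  obtain ⟨ut, hut⟩ := hSlater
  set lam : ℝ := J ut / (ρ - Jc ut) + 1 with hlam
  have hden : 0 < ρ - Jc ut := by linarith
  have hlam0 : 0 ≤ lam := add_nonneg (div_nonneg (hJ ut) hden.le) zero_le_one
  refine ⟨lam, hlam0, ?_⟩
  by_contra h
  push_neg at h
  have hle := hmin lam hlam0 ut
  rw [hL, hL] at hle
  have h1 : 0 ≤ J (uopt lam) + lam * (Jc (uopt lam) - ρ) := by
    have := hJ (uopt lam)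
    nlinarith
  have h2 : lam * (ρ - Jc ut) = J ut + (ρ - Jc ut) := by
    rw [hlam, add_mul, div_mul_cancel₀ _ hden.ne', one_mul]
  nlinarith
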